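/- Let V be a finite index set with finite state spaces X_v of size at least 2 and p a strictly positive probability distribution on X_V. Let A, B, C be pairwise disjoint subsets of V with A and B nonempty (C may be empty). Then X_A ⊥ X_B | X_C [p] holds if and only if λ_{A'∪B'∪C'}^{A∪B∪C}(x) = 0 for every nonempty A' ⊆ A, every nonempty B' ⊆ B, every C' ⊆ C, and every x ∈ X_{A'∪B'∪C'}. -/

import Mathlib

open Finset

open scoped Classical

variable {V : Type} [Fintype V] [DecidableEq V]

/-- Joint state space: variable `v` takes values in `{0, …, d v + 1}`,
so each state space has size `d v + 2 ≥ 2`. -/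
abbrev Config (V : Type) (d : V → ℕ) : Type := ∀ v : V, Fin (d v + 2)

/-- Marginal `p_M` of `p` on the margin `M`, as a function of a full configuration
(it depends only on the coordinates in `M`). -/
noncomputable def margin (d : V → ℕ) (p : Config V d → ℝ) (M : Finset V)
    (x : Config V d) : ℝ :=
  ∑ y : Config V d, if ∀ v ∈ M, y v = x v then p y else 0

/-- Marginal log-linear parameter `λ_L^M(x_L)`:
`|X_M|⁻¹ ∑_{y_M ∈ X_M} log p_M(y_M) ∏_{v ∈ L} (|X_v|·1[x_v = y_v] − 1)`.
The sum over `y_M ∈ X_M` is realized by summing over full configurations `y`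
that are `0` outside `M` (one representative for each `y_M`). -/
noncomputable def mll (d : V → ℕ) (p : Config V d → ℝ) (L M : Finset V)
    (x : Config V d) : ℝ :=
  (∏ v ∈ M, ((d v + 2 : ℕ) : ℝ))⁻¹ *
    ∑ y : Config V d,
      if ∀ v ∉ M, y v = 0 then
        Real.log (margin d p M y) *
          ∏ v ∈ L, (((d v + 2 : ℕ) : ℝ) * (if x v = y v then 1 else 0) - 1)
      else 0

/-- Conditional independence `X_A ⊥ X_B | X_C [p]`:
`p_{A∪B∪C}(x) · p_C(x) = p_{A∪C}(x) · p_{B∪C}(x)` for all configurations. -/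
def CondIndep (d : V → ℕ) (p : Config V d → ℝ) (A B C : Finset V) : Prop :=
  ∀ x : Config V d,
    margin d p (A ∪ B ∪ C) x * margin d p C x
      = margin d p (A ∪ C) x * margin d p (B ∪ C) x


noncomputable def chi (d : V → ℕ) (x y : Config V d) (v : V) : ℝ :=
  ((d v + 2 : ℕ) : ℝ) * (if x v = y v then 1 else 0) - 1

noncomputable def J (d : V → ℕ) (f : Config V d → ℝ) (L M : Finset V)
    (x : Config V d) : ℝ :=
  ∑ y : Config V d, if ∀ v ∉ M, y v = 0 then f y * ∏ v ∈ L, chi d x y v else 0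

lemma mll_eq_J (d : V → ℕ) (p : Config V d → ℝ) (L M : Finset V) (x : Config V d) :
    mll d p L M x = (∏ v ∈ M, ((d v + 2 : ℕ) : ℝ))⁻¹ *
      J d (fun y => Real.log (margin d p M y)) L M x := rfl

lemma margin_congr (d : V → ℕ) (p : Config V d → ℝ) (M : Finset V)
    {x x' : Config V d} (h : ∀ v ∈ M, x v = x' v) :
    margin d p M x = margin d p M x' := by
  unfold margin
  refine Finset.sum_congr rfl fun y _ => if_congr ?_ rfl rfl
  exact forall₂_congr fun v hv => by rw [h v hv]

lemma margin_pos (d : V → ℕ) {p : Config V d → ℝ} (hpos : ∀ x, 0 < p x)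
    (M : Finset V) (x : Config V d) : 0 < margin d p M x := by
  unfold margin
  refine Finset.sum_pos' (fun y _ => ?_) ⟨x, Finset.mem_univ x, ?_⟩
  · split
    · exact (hpos y).le
    · rfl
  · simp [hpos x]

lemma J_add_sub (d : V → ℕ) (f1 f2 f3 : Config V d → ℝ) (L M : Finset V)
    (x : Config V d) :
    J d (fun y => f1 y + f2 y - f3 y) L M x
      = J d f1 L M x + J d f2 L M x - J d f3 L M x := by
  unfold J
  rw [← Finset.sum_add_distrib, ← Finset.sum_sub_distrib]
  refine Finset.sum_congr rfl fun y _ => ?_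
  split <;> ring

/-- General product-splitting lemma. -/
lemma split_sum (d : V → ℕ) (S T C : Finset V)
    (hST : Disjoint S T) (hSC : Disjoint S C) (hTC : Disjoint T C)
    (F G : Config V d → ℝ)
    (hF : ∀ y z : Config V d, (∀ v ∈ S ∪ C, y v = z v) → F y = F z)
    (hG : ∀ y z : Config V d, (∀ v ∈ T ∪ C, y v = z v) → G y = G z)
    (x : Config V d) :
    (∑ y : Config V d,
        if (∀ v ∉ S ∪ T ∪ C, y v = 0) ∧ (∀ v ∈ C, y v = x v) then F y * G y else 0)
      = (∑ z : Config V d,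
          if (∀ v ∉ S ∪ C, z v = 0) ∧ (∀ v ∈ C, z v = x v) then F z else 0)
        * ∑ w : Config V d,
            if (∀ v ∉ T ∪ C, w v = 0) ∧ (∀ v ∈ C, w v = x v) then G w else 0 := by
  have hSnT : ∀ v ∈ S, v ∉ T := fun v hv => Finset.disjoint_left.mp hST hv
  have hSnC : ∀ v ∈ S, v ∉ C := fun v hv => Finset.disjoint_left.mp hSC hv
  have hTnC : ∀ v ∈ T, v ∉ C := fun v hv => Finset.disjoint_left.mp hTC hv
  have hCnS : ∀ v ∈ C, v ∉ S := fun v hv => Finset.disjoint_right.mp hSC hv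
  have hCnT : ∀ v ∈ C, v ∉ T := fun v hv => Finset.disjoint_right.mp hTC hv
  have hTnS : ∀ v ∈ T, v ∉ S := fun v hv => Finset.disjoint_right.mp hST hv
  rw [← Finset.sum_filter, ← Finset.sum_filter, ← Finset.sum_filter,
    Finset.sum_mul_sum, ← Finset.sum_product']
  refine (Finset.sum_nbij'
    (i := fun q : Config V d × Config V d => (fun v => if v ∈ S then q.1 v else q.2 v : Config V d))
    (j := fun y => ((fun v => if v ∈ T then 0 else y v : Config V d),
                    (fun v => if v ∈ S then 0 else y v : Config V d)))
    ?_ ?_ ?_ ?_ ?_).symm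
  · rintro ⟨z, w⟩ hq
    simp only [Finset.mem_product, Finset.mem_filter, Finset.mem_univ, true_and] at hq ⊢
    obtain ⟨⟨hz0, hzC⟩, hw0, hwC⟩ := hq
    constructor
    · intro v hv
      simp only [Finset.mem_union, not_or] at hv
      obtain ⟨⟨hvS, hvT⟩, hvC⟩ := hv
      simp only [hvS, if_neg]
      exact hw0 v (by simp [hvT, hvC])
    · intro v hv
      simp only [if_neg (hCnS v hv)]
      exact hwC v hv
  · intro y hy
    simp only [Finset.mem_product, Finset.mem_filter, Finset.mem_univ, true_and] at hy ⊢
    obtain ⟨hy0, hyC⟩ := hy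
    refine ⟨⟨fun v hv => ?_, fun v hv => ?_⟩, fun v hv => ?_, fun v hv => ?_⟩
    · simp only [Finset.mem_union, not_or] at hv
      by_cases hvT : v ∈ T
      · simp [hvT]
      · simp only [if_neg hvT]
        exact hy0 v (by simp [hv.1, hv.2, hvT])
    · simp only [if_neg (hCnT v hv)]
      exact hyC v hv
    · simp only [Finset.mem_union, not_or] at hv
      by_cases hvS : v ∈ S
      · simp [hvS]
      · simp only [if_neg hvS]
        exact hy0 v (by simp [hv.1, hv.2, hvS])
    · simp only [if_neg (hCnS v hv)]
      exact hyC v hv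
  · rintro ⟨z, w⟩ hq
    simp only [Finset.mem_product, Finset.mem_filter, Finset.mem_univ, true_and] at hq
    obtain ⟨⟨hz0, hzC⟩, hw0, hwC⟩ := hq
    have h1 : (fun v => if v ∈ T then 0 else if v ∈ S then z v else w v : Config V d) = z := by
      funext v
      by_cases hvT : v ∈ T
      · simp only [if_pos hvT]
        exact (hz0 v (by simp [hTnS v hvT, hTnC v hvT])).symm
      · simp only [if_neg hvT]
        by_cases hvS : v ∈ S
        · simp [hvS]
        · simp only [if_neg hvS]
          by_cases hvC : v ∈ C
          · rw [hwC v hvC, hzC v hvC]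
          · rw [hw0 v (by simp [hvT, hvC]), hz0 v (by simp [hvS, hvC])]
    have h2 : (fun v => if v ∈ S then 0 else if v ∈ S then z v else w v : Config V d) = w := by
      funext v
      by_cases hvS : v ∈ S
      · simp only [if_pos hvS]
        exact (hw0 v (by simp [hSnT v hvS, hSnC v hvS])).symm
      · simp [hvS]
    simp only [Prod.mk.injEq]
    exact ⟨h1, h2⟩
  · intro y hy
    simp only [Finset.mem_filter, Finset.mem_univ, true_and] at hy
    funext v
    by_cases hvS : v ∈ S
    · simp [hvS, hSnT v hvS]
    · simp [hvS]
  · rintro ⟨z, w⟩ hq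
    simp only [Finset.mem_product, Finset.mem_filter, Finset.mem_univ, true_and] at hq
    obtain ⟨⟨hz0, hzC⟩, hw0, hwC⟩ := hq
    have hFeq : F z = F (fun v => if v ∈ S then z v else w v) := by
      refine hF _ _ fun v hv => ?_
      rcases Finset.mem_union.mp hv with hvS | hvC
      · simp [hvS]
      · simp only [if_neg (hCnS v hvC)]
        rw [hzC v hvC, hwC v hvC]
    have hGeq : G w = G (fun v => if v ∈ S then z v else w v) := by
      refine hG _ _ fun v hv => ?_
      rcases Finset.mem_union.mp hv with hvT | hvC
      · simp [hTnS v hvT]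
      · simp [hCnS v hvC]
    rw [← hFeq, ← hGeq]

lemma chi_rep_sum_zero (d : V → ℕ) (x : Config V d) (w : V) :
    (∑ z : Config V d, if (∀ v ∉ ({w} : Finset V), z v = 0) then chi d x z w else 0) = 0 := by
  rw [← Finset.sum_filter]
  have h : ∑ z ∈ filter (fun z : Config V d => ∀ v ∉ ({w} : Finset V), z v = 0) univ,
        chi d x z w
      = ∑ t : Fin (d w + 2), (((d w + 2 : ℕ) : ℝ) * (if x w = t then 1 else 0) - 1) := by
    refine Finset.sum_nbij' (i := fun z => z w)
      (j := fun t => Function.update (fun v => (0 : Fin (d v + 2))) w t) ?_ ?_ ?_ ?_ ?_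
    · intro z _; exact Finset.mem_univ _
    · intro t _
      simp only [Finset.mem_filter, Finset.mem_univ, true_and, Finset.mem_singleton]
      intro v hv
      simp [Function.update_of_ne hv]
    · intro z hz
      simp only [Finset.mem_filter, Finset.mem_univ, true_and, Finset.mem_singleton] at hz
      funext v
      by_cases hv : v = w
      · subst hv; simp
      · simp [Function.update_of_ne hv, hz v hv]
    · intro t _; simp
    · intro z _; rfl
  rw [h, Finset.sum_sub_distrib, ← Finset.mul_sum, Finset.sum_ite_eq]
  simp

lemma J_vanish (d : V → ℕ) (f : Config V d → ℝ) (L M S : Finset V)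
    (hLM : L ⊆ M) (hSM : S ⊆ M)
    (hf : ∀ y z : Config V d, (∀ v ∈ S, y v = z v) → f y = f z)
    {w : V} (hwL : w ∈ L) (hwS : w ∉ S) (x : Config V d)
     :
    J d f L M x = 0 := by
  have hwM : w ∈ M := hLM hwL
  have hM : {w} ∪ M.erase w = M := by
    rw [← Finset.insert_eq, Finset.insert_erase hwM]
  have key := split_sum d {w} (M.erase w) ∅
    (by simp) (by simp) (by simp)
    (fun y => chi d x y w)
    (fun y => f y * ∏ v ∈ L.erase w, chi d x y v)
    (by
      intro y z h
      have := h w (by simp)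
      unfold chi
      rw [this])
    (by
      intro y z h
      have h1 : f y = f z := hf y z fun v hv => h v (by
        simp only [Finset.union_empty, Finset.mem_erase]
        exact ⟨fun he => hwS (he ▸ hv), hSM hv⟩)
      have h2 : ∏ v ∈ L.erase w, chi d x y v = ∏ v ∈ L.erase w, chi d x z v := by
        refine Finset.prod_congr rfl fun v hv => ?_
        have hveq : y v = z v := h v (by
          simp only [Finset.union_empty, Finset.mem_erase]
          exact ⟨(Finset.mem_erase.mp hv).1, hLM (Finset.mem_erase.mp hv).2⟩)
        unfold chi
        rw [hveq]
      rw [h1, h2])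
    x
  simp only [Finset.union_empty, hM, Finset.notMem_empty, false_implies, implies_true,
    and_true] at key
  have hJ : J d f L M x = ∑ y : Config V d,
      if (∀ v ∉ M, y v = 0) then
        chi d x y w * (f y * ∏ v ∈ L.erase w, chi d x y v) else 0 := by
    unfold J
    refine Finset.sum_congr rfl fun y _ => ?_
    split
    · rw [← Finset.mul_prod_erase L _ hwL]; ring
    · rfl
  rw [hJ, key, chi_rep_sum_zero, zero_mul]

lemma sum_single (d : V → ℕ) (F : Config V d → ℝ) (S : Finset V)
    (hF : ∀ y z : Config V d, (∀ v ∈ S, y v = z v) → F y = F z) (x : Config V d) :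
    (∑ z : Config V d, if (∀ v ∉ S, z v = 0) ∧ (∀ v ∈ S, z v = x v) then F z else 0)
      = F x := by
  have hy0 : ∀ z : Config V d,
      ((∀ v ∉ S, z v = 0) ∧ (∀ v ∈ S, z v = x v)) →
      z = (fun v => if v ∈ S then x v else 0) := by
    intro z ⟨h1, h2⟩
    funext v
    by_cases hv : v ∈ S
    · simp [hv, h2 v hv]
    · simp [hv, h1 v hv]
  rw [Finset.sum_eq_single (fun v => if v ∈ S then x v else 0 : Config V d)]
  · rw [if_pos ⟨fun v hv => by simp [hv], fun v hv => by simp [hv]⟩]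
    exact hF _ _ fun v hv => by simp [hv]
  · intro b _ hb
    rw [if_neg fun hc => hb (hy0 b hc)]
  · intro h
    exact absurd (Finset.mem_univ _) h

lemma marg_marg (d : V → ℕ) (p : Config V d → ℝ) {S M : Finset V} (hSM : S ⊆ M)
    (x : Config V d) :
    margin d p S x = ∑ y : Config V d,
      if (∀ v ∉ M, y v = 0) ∧ (∀ v ∈ S, y v = x v) then margin d p M y else 0 := by
  have step1 : ∀ y : Config V d,
      (if (∀ v ∉ M, y v = 0) ∧ (∀ v ∈ S, y v = x v) then margin d p M y else 0)
        = ∑ z : Config V d,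
          if ((∀ v ∉ M, y v = 0) ∧ (∀ v ∈ S, y v = x v)) ∧ (∀ v ∈ M, z v = y v)
            then p z else 0 := by
    intro y
    unfold margin
    split
    · rename_i hc
      refine Finset.sum_congr rfl fun z _ => ?_
      exact (if_congr (and_iff_right hc) rfl rfl).symm
    · rename_i hc
      symm
      refine Finset.sum_eq_zero fun z _ => ?_
      rw [if_neg fun hh => hc hh.1]
  rw [Finset.sum_congr rfl fun y _ => step1 y, Finset.sum_comm]
  unfold margin
  refine Finset.sum_congr rfl fun z _ => ?_
  rw [Finset.sum_eq_single (fun v => if v ∈ M then z v else 0 : Config V d)]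
  · split_ifs with h1 h2 h2
    · rfl
    · exact absurd ⟨⟨fun v hv => by simp [hv],
        fun v hv => by simp [hSM hv, h1 v hv]⟩, fun v hv => by simp [hv]⟩ h2
    · exfalso
      apply h1
      intro v hv
      have := h2.1.2 v hv
      simpa [hSM hv] using this
    · rfl
  · intro y _ hy
    rw [if_neg]
    rintro ⟨⟨h1, -⟩, h3⟩
    refine hy ?_
    funext v
    by_cases hv : v ∈ M
    · simp [hv, (h3 v hv).symm]
    · simp [hv, h1 v hv]
  · intro h
    exact absurd (Finset.mem_univ _) h

lemma J_recon (d : V → ℕ) (f : Config V d → ℝ) (M : Finset V)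
    (hf : ∀ y z : Config V d, (∀ v ∈ M, y v = z v) → f y = f z) (x : Config V d) :
    ∑ L ∈ M.powerset, (∏ v ∈ M, ((d v + 2 : ℕ) : ℝ))⁻¹ * J d f L M x = f x := by
  have hKpos : (0 : ℝ) < ∏ v ∈ M, ((d v + 2 : ℕ) : ℝ) :=
    Finset.prod_pos fun v _ => by positivity
  rw [← Finset.mul_sum]
  unfold J
  rw [Finset.sum_comm]
  have hK : ∀ y : Config V d,
      (∑ L ∈ M.powerset, if (∀ v ∉ M, y v = 0) then f y * ∏ v ∈ L, chi d x y v else 0)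
        = (∏ v ∈ M, ((d v + 2 : ℕ) : ℝ)) *
          (if (∀ v ∉ M, y v = 0) ∧ (∀ v ∈ M, x v = y v) then f y else 0) := by
    intro y
    by_cases hy : ∀ v ∉ M, y v = 0
    · simp only [if_pos hy]
      rw [← Finset.mul_sum]
      have h1 : ∑ L ∈ M.powerset, ∏ v ∈ L, chi d x y v = ∏ v ∈ M, (chi d x y v + 1) := by
        rw [Finset.prod_add]
        simp
      have h2 : ∏ v ∈ M, (chi d x y v + 1)
          = (∏ v ∈ M, ((d v + 2 : ℕ) : ℝ)) * ∏ v ∈ M, (if x v = y v then (1:ℝ) else 0) := by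
        rw [← Finset.prod_mul_distrib]
        refine Finset.prod_congr rfl fun v _ => ?_
        unfold chi
        ring
      rw [h1, h2, Finset.prod_boole]
      by_cases hc : ∀ v ∈ M, x v = y v
      · rw [if_pos hc, if_pos (⟨hy, hc⟩ : (∀ v ∉ M, y v = 0) ∧ ∀ v ∈ M, x v = y v)]
        ring
      · rw [if_neg hc, if_neg (fun h : (∀ v ∉ M, y v = 0) ∧ ∀ v ∈ M, x v = y v => hc h.2)]
        ring
    · rw [if_neg (fun h : (∀ v ∉ M, y v = 0) ∧ ∀ v ∈ M, x v = y v => hy h.1), mul_zero]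
      exact Finset.sum_eq_zero fun L _ => if_neg hy
  rw [Finset.sum_congr rfl fun y _ => hK y, ← Finset.mul_sum, ← mul_assoc,
    inv_mul_cancel₀ hKpos.ne', one_mul]
  rw [Finset.sum_eq_single (fun v => if v ∈ M then x v else 0 : Config V d)]
  · rw [if_pos ⟨fun v hv => by simp [hv], fun v hv => by simp [hv]⟩]
    exact hf _ _ fun v hv => by simp [hv]
  · intro b _ hb
    rw [if_neg]
    rintro ⟨h1, h2⟩
    refine hb ?_
    funext v
    by_cases hv : v ∈ M
    · simp [hv, (h2 v hv).symm]
    · simp [hv, h1 v hv]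
  · intro h
    exact absurd (Finset.mem_univ _) h

lemma mll_congr (d : V → ℕ) (p : Config V d → ℝ) (L M : Finset V)
    {x x' : Config V d} (h : ∀ v ∈ L, x v = x' v) :
    mll d p L M x = mll d p L M x' := by
  unfold mll
  congr 1
  refine Finset.sum_congr rfl fun y _ => ?_
  split
  · congr 1
    exact Finset.prod_congr rfl fun v hv => by rw [h v hv]
  · rfl

/-- `X_A ⊥ X_B | X_C [p]` holds iff `λ_{A'∪B'∪C'}^{A∪B∪C} = 0` for all
nonempty `A' ⊆ A`, nonempty `B' ⊆ B` and `C' ⊆ C`. -/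
theorem condIndep_iff_mll_zero (d : V → ℕ) (p : Config V d → ℝ)
    (hpos : ∀ x, 0 < p x) (hsum : ∑ x, p x = 1)
    (A B C : Finset V)
    (hAB : Disjoint A B) (hAC : Disjoint A C) (hBC : Disjoint B C)
    (hA : A.Nonempty) (hB : B.Nonempty) :
    CondIndep d p A B C ↔
      ∀ A' B' C' : Finset V, A' ⊆ A → B' ⊆ B → C' ⊆ C →
        A'.Nonempty → B'.Nonempty →
        ∀ x : Config V d, mll d p (A' ∪ B' ∪ C') (A ∪ B ∪ C) x = 0 := by
  constructor
  · -- forward direction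
    intro hCI A' B' C' hA' hB' hC' hA'ne hB'ne x
    obtain ⟨a, ha⟩ := hA'ne
    obtain ⟨b, hb⟩ := hB'ne
    have hLM : A' ∪ B' ∪ C' ⊆ A ∪ B ∪ C :=
      Finset.union_subset_union (Finset.union_subset_union hA' hB') hC'
    have hACM : A ∪ C ⊆ A ∪ B ∪ C :=
      Finset.union_subset_union Finset.subset_union_left (Finset.Subset.refl C)
    have hBCM : B ∪ C ⊆ A ∪ B ∪ C :=
      Finset.union_subset_union Finset.subset_union_right (Finset.Subset.refl C)
    have hCM : C ⊆ A ∪ B ∪ C := Finset.subset_union_right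
    have haA : a ∈ A := hA' ha
    have hbB : b ∈ B := hB' hb
    have haL : a ∈ A' ∪ B' ∪ C' :=
      Finset.mem_union_left _ (Finset.mem_union_left _ ha)
    have hbL : b ∈ A' ∪ B' ∪ C' :=
      Finset.mem_union_left _ (Finset.mem_union_right _ hb)
    have hbAC : b ∉ A ∪ C := by
      simp only [Finset.mem_union, not_or]
      exact ⟨Finset.disjoint_right.mp hAB hbB, Finset.disjoint_left.mp hBC hbB⟩
    have haBC : a ∉ B ∪ C := by
      simp only [Finset.mem_union, not_or]
      exact ⟨Finset.disjoint_left.mp hAB haA, Finset.disjoint_left.mp hAC haA⟩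
    have haC : a ∉ C := Finset.disjoint_left.mp hAC haA
    rw [mll_eq_J]
    have hdecomp : (fun y => Real.log (margin d p (A ∪ B ∪ C) y))
        = fun y => Real.log (margin d p (A ∪ C) y) + Real.log (margin d p (B ∪ C) y)
            - Real.log (margin d p C y) := by
      funext y
      have h := hCI y
      have h1 := margin_pos d hpos (A ∪ B ∪ C) y
      have h2 := margin_pos d hpos C y
      have h3 := margin_pos d hpos (A ∪ C) y
      have h4 := margin_pos d hpos (B ∪ C) y
      have hlog := congrArg Real.log h
      rw [Real.log_mul h1.ne' h2.ne', Real.log_mul h3.ne' h4.ne'] at hlog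
      linarith
    rw [hdecomp, J_add_sub]
    have e1 : J d (fun y => Real.log (margin d p (A ∪ C) y)) (A' ∪ B' ∪ C')
        (A ∪ B ∪ C) x = 0 :=
      J_vanish d _ _ _ (A ∪ C) hLM hACM
        (fun y z h => by rw [margin_congr d p (A ∪ C) h]) hbL hbAC x
    have e2 : J d (fun y => Real.log (margin d p (B ∪ C) y)) (A' ∪ B' ∪ C')
        (A ∪ B ∪ C) x = 0 :=
      J_vanish d _ _ _ (B ∪ C) hLM hBCM
        (fun y z h => by rw [margin_congr d p (B ∪ C) h]) haL haBC x
    have e3 : J d (fun y => Real.log (margin d p C y)) (A' ∪ B' ∪ C')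
        (A ∪ B ∪ C) x = 0 :=
      J_vanish d _ _ _ C hLM hCM
        (fun y z h => by rw [margin_congr d p C h]) haL haC x
    rw [e1, e2, e3]
    ring
  · -- backward direction
    intro hzero x
    have hrec : ∀ z : Config V d, Real.log (margin d p (A ∪ B ∪ C) z)
        = ∑ L ∈ (A ∪ B ∪ C).powerset, mll d p L (A ∪ B ∪ C) z := by
      intro z
      have h := J_recon d (fun y => Real.log (margin d p (A ∪ B ∪ C) y)) (A ∪ B ∪ C)
        (fun y w hw => by rw [margin_congr d p _ hw]) z
      rw [← h]
      exact (Finset.sum_congr rfl fun L _ => mll_eq_J d p L _ z).symm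
    have hsplit : ∀ z : Config V d, Real.log (margin d p (A ∪ B ∪ C) z)
        = (∑ L ∈ ((A ∪ B ∪ C).powerset.filter fun L => (L ∩ A).Nonempty).filter
              (fun L => ¬(L ∩ B).Nonempty), mll d p L (A ∪ B ∪ C) z)
          + ∑ L ∈ (A ∪ B ∪ C).powerset.filter (fun L => ¬(L ∩ A).Nonempty),
              mll d p L (A ∪ B ∪ C) z := by
      intro z
      rw [hrec z,
        ← Finset.sum_filter_add_sum_filter_not ((A ∪ B ∪ C).powerset)
          (fun L => (L ∩ A).Nonempty)]
      congr 1
      rw [← Finset.sum_filter_add_sum_filter_not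
          ((A ∪ B ∪ C).powerset.filter fun L => (L ∩ A).Nonempty)
          (fun L => (L ∩ B).Nonempty)]
      have hz1 : ∑ L ∈ ((A ∪ B ∪ C).powerset.filter fun L => (L ∩ A).Nonempty).filter
          (fun L => (L ∩ B).Nonempty), mll d p L (A ∪ B ∪ C) z = 0 := by
        refine Finset.sum_eq_zero fun L hL => ?_
        simp only [Finset.mem_filter, Finset.mem_powerset] at hL
        obtain ⟨⟨hLsub, hLA⟩, hLB⟩ := hL
        have hLeq : (L ∩ A) ∪ (L ∩ B) ∪ (L ∩ C) = L := by
          rw [← Finset.inter_union_distrib_left, ← Finset.inter_union_distrib_left]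
          exact Finset.inter_eq_left.mpr hLsub
        have := hzero (L ∩ A) (L ∩ B) (L ∩ C) Finset.inter_subset_right
          Finset.inter_subset_right Finset.inter_subset_right hLA hLB z
        rwa [hLeq] at this
      rw [hz1, zero_add]
    set HH : Config V d → ℝ := fun z => Real.exp
      (∑ L ∈ ((A ∪ B ∪ C).powerset.filter fun L => (L ∩ A).Nonempty).filter
        (fun L => ¬(L ∩ B).Nonempty), mll d p L (A ∪ B ∪ C) z) with hHH
    set GG : Config V d → ℝ := fun z => Real.exp
      (∑ L ∈ (A ∪ B ∪ C).powerset.filter (fun L => ¬(L ∩ A).Nonempty),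
        mll d p L (A ∪ B ∪ C) z) with hGG
    have hfact : ∀ z : Config V d, margin d p (A ∪ B ∪ C) z = HH z * GG z := by
      intro z
      rw [hHH, hGG]
      dsimp only
      rw [← Real.exp_add, ← hsplit z, Real.exp_log (margin_pos d hpos _ z)]
    have hHdep : ∀ y z : Config V d, (∀ v ∈ A ∪ C, y v = z v) → HH y = HH z := by
      intro y z h
      rw [hHH]
      dsimp only
      congr 1
      refine Finset.sum_congr rfl fun L hL => ?_
      simp only [Finset.mem_filter, Finset.mem_powerset] at hL
      obtain ⟨⟨hLsub, -⟩, hLB⟩ := hL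
      have hLB' : L ∩ B = ∅ := Finset.not_nonempty_iff_eq_empty.mp hLB
      have hLAC : L ⊆ A ∪ C := by
        intro v hv
        rcases Finset.mem_union.mp (hLsub hv) with hvm | hvC
        · rcases Finset.mem_union.mp hvm with hvA | hvB
          · exact Finset.mem_union_left _ hvA
          · exact absurd (Finset.mem_inter.mpr ⟨hv, hvB⟩) (by simp [hLB'])
        · exact Finset.mem_union_right _ hvC
      exact mll_congr d p L _ fun v hv => h v (hLAC hv)
    have hGdep : ∀ y z : Config V d, (∀ v ∈ B ∪ C, y v = z v) → GG y = GG z := by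
      intro y z h
      rw [hGG]
      dsimp only
      congr 1
      refine Finset.sum_congr rfl fun L hL => ?_
      simp only [Finset.mem_filter, Finset.mem_powerset] at hL
      obtain ⟨hLsub, hLA⟩ := hL
      have hLA' : L ∩ A = ∅ := Finset.not_nonempty_iff_eq_empty.mp hLA
      have hLBC : L ⊆ B ∪ C := by
        intro v hv
        rcases Finset.mem_union.mp (hLsub hv) with hvm | hvC
        · rcases Finset.mem_union.mp hvm with hvA | hvB
          · exact absurd (Finset.mem_inter.mpr ⟨hv, hvA⟩) (by simp [hLA'])
          · exact Finset.mem_union_left _ hvB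
        · exact Finset.mem_union_right _ hvC
      exact mll_congr d p L _ fun v hv => h v (hLBC hv)
    have hCsub : C ⊆ A ∪ B ∪ C := Finset.subset_union_right
    have hACsub : A ∪ C ⊆ A ∪ B ∪ C :=
      Finset.union_subset_union Finset.subset_union_left (Finset.Subset.refl C)
    have hBCsub : B ∪ C ⊆ A ∪ B ∪ C :=
      Finset.union_subset_union Finset.subset_union_right (Finset.Subset.refl C)
    -- margin over C factorizes
    have mC : margin d p C x
        = (∑ z : Config V d,
            if (∀ v ∉ A ∪ C, z v = 0) ∧ (∀ v ∈ C, z v = x v) then HH z else 0)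
          * ∑ w : Config V d,
            if (∀ v ∉ B ∪ C, w v = 0) ∧ (∀ v ∈ C, w v = x v) then GG w else 0 := by
      have estep : ∀ y : Config V d,
          (if (∀ v ∉ A ∪ B ∪ C, y v = 0) ∧ (∀ v ∈ C, y v = x v)
            then margin d p (A ∪ B ∪ C) y else 0)
          = if (∀ v ∉ A ∪ B ∪ C, y v = 0) ∧ (∀ v ∈ C, y v = x v)
            then HH y * GG y else 0 := by
        intro y
        split
        · exact hfact y
        · rfl
      rw [marg_marg d p hCsub x, Finset.sum_congr rfl fun y _ => estep y]
      exact split_sum d A B C hAB hAC hBC HH GG hHdep hGdep x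
    -- margin over A ∪ C
    have mAC : margin d p (A ∪ C) x
        = HH x * ∑ w : Config V d,
            if (∀ v ∉ B ∪ C, w v = 0) ∧ (∀ v ∈ C, w v = x v) then GG w else 0 := by
      rw [marg_marg d p hACsub x]
      have estep : ∀ y : Config V d,
          (if (∀ v ∉ A ∪ B ∪ C, y v = 0) ∧ (∀ v ∈ A ∪ C, y v = x v)
            then margin d p (A ∪ B ∪ C) y else 0)
          = if (∀ v ∉ A ∪ B ∪ C, y v = 0) ∧ (∀ v ∈ C, y v = x v)
            then (if (∀ v ∈ A, y v = x v) then HH y else 0) * GG y else 0 := by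
        intro y
        by_cases h1 : (∀ v ∉ A ∪ B ∪ C, y v = 0)
        · by_cases h2 : ∀ v ∈ C, y v = x v
          · by_cases h3 : ∀ v ∈ A, y v = x v
            · rw [if_pos ⟨h1, Finset.forall_mem_union.mpr ⟨h3, h2⟩⟩, if_pos ⟨h1, h2⟩,
                if_pos h3]
              exact hfact y
            · rw [if_neg, if_pos ⟨h1, h2⟩, if_neg h3, zero_mul]
              rintro ⟨-, hAC'⟩
              exact h3 fun v hv => (Finset.forall_mem_union.mp hAC').1 v hv
          · rw [if_neg, if_neg]
            · rintro ⟨-, h2'⟩; exact h2 h2'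
            · rintro ⟨-, hAC'⟩
              exact h2 fun v hv => (Finset.forall_mem_union.mp hAC').2 v hv
        · rw [if_neg (fun h => h1 h.1), if_neg (fun h => h1 h.1)]
      rw [Finset.sum_congr rfl fun y _ => estep y,
        split_sum d A B C hAB hAC hBC
          (fun y => if (∀ v ∈ A, y v = x v) then HH y else 0) GG
          (fun y z h => by
            have hiff : (∀ v ∈ A, y v = x v) ↔ (∀ v ∈ A, z v = x v) :=
              forall₂_congr fun v hv => by rw [h v (Finset.mem_union_left _ hv)]
            rw [hHdep y z h, if_congr hiff rfl rfl])
          hGdep x]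
      congr 1
      have estep2 : ∀ z : Config V d,
          (if (∀ v ∉ A ∪ C, z v = 0) ∧ (∀ v ∈ C, z v = x v)
            then (if (∀ v ∈ A, z v = x v) then HH z else 0) else 0)
          = if (∀ v ∉ A ∪ C, z v = 0) ∧ (∀ v ∈ A ∪ C, z v = x v) then HH z else 0 := by
        intro z
        by_cases h1 : (∀ v ∉ A ∪ C, z v = 0)
        · by_cases h2 : ∀ v ∈ C, z v = x v
          · by_cases h3 : ∀ v ∈ A, z v = x v
            · rw [if_pos ⟨h1, h2⟩, if_pos h3,
                if_pos ⟨h1, Finset.forall_mem_union.mpr ⟨h3, h2⟩⟩]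
            · rw [if_pos ⟨h1, h2⟩, if_neg h3, if_neg]
              rintro ⟨-, hAC'⟩
              exact h3 fun v hv => (Finset.forall_mem_union.mp hAC').1 v hv
          · rw [if_neg (fun h => h2 h.2), if_neg]
            rintro ⟨-, hAC'⟩
            exact h2 fun v hv => (Finset.forall_mem_union.mp hAC').2 v hv
        · rw [if_neg (fun h => h1 h.1), if_neg (fun h => h1 h.1)]
      rw [Finset.sum_congr rfl fun z _ => estep2 z]
      exact sum_single d HH (A ∪ C) hHdep x
    -- margin over B ∪ C
    have mBC : margin d p (B ∪ C) x
        = GG x * ∑ z : Config V d,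
            if (∀ v ∉ A ∪ C, z v = 0) ∧ (∀ v ∈ C, z v = x v) then HH z else 0 := by
      rw [marg_marg d p hBCsub x]
      have estep : ∀ y : Config V d,
          (if (∀ v ∉ A ∪ B ∪ C, y v = 0) ∧ (∀ v ∈ B ∪ C, y v = x v)
            then margin d p (A ∪ B ∪ C) y else 0)
          = if (∀ v ∉ A ∪ B ∪ C, y v = 0) ∧ (∀ v ∈ C, y v = x v)
            then HH y * (if (∀ v ∈ B, y v = x v) then GG y else 0) else 0 := by
        intro y
        by_cases h1 : (∀ v ∉ A ∪ B ∪ C, y v = 0)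
        · by_cases h2 : ∀ v ∈ C, y v = x v
          · by_cases h3 : ∀ v ∈ B, y v = x v
            · rw [if_pos ⟨h1, Finset.forall_mem_union.mpr ⟨h3, h2⟩⟩, if_pos ⟨h1, h2⟩,
                if_pos h3]
              exact hfact y
            · rw [if_neg, if_pos ⟨h1, h2⟩, if_neg h3, mul_zero]
              rintro ⟨-, hBC'⟩
              exact h3 fun v hv => (Finset.forall_mem_union.mp hBC').1 v hv
          · rw [if_neg, if_neg]
            · rintro ⟨-, h2'⟩; exact h2 h2'
            · rintro ⟨-, hBC'⟩
              exact h2 fun v hv => (Finset.forall_mem_union.mp hBC').2 v hv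
        · rw [if_neg (fun h => h1 h.1), if_neg (fun h => h1 h.1)]
      rw [Finset.sum_congr rfl fun y _ => estep y,
        split_sum d A B C hAB hAC hBC
          HH (fun y => if (∀ v ∈ B, y v = x v) then GG y else 0)
          hHdep
          (fun y z h => by
            have hiff : (∀ v ∈ B, y v = x v) ↔ (∀ v ∈ B, z v = x v) :=
              forall₂_congr fun v hv => by rw [h v (Finset.mem_union_left _ hv)]
            rw [hGdep y z h, if_congr hiff rfl rfl])
          x]
      rw [mul_comm]
      congr 1
      have estep2 : ∀ z : Config V d,
          (if (∀ v ∉ B ∪ C, z v = 0) ∧ (∀ v ∈ C, z v = x v)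
            then (if (∀ v ∈ B, z v = x v) then GG z else 0) else 0)
          = if (∀ v ∉ B ∪ C, z v = 0) ∧ (∀ v ∈ B ∪ C, z v = x v) then GG z else 0 := by
        intro z
        by_cases h1 : (∀ v ∉ B ∪ C, z v = 0)
        · by_cases h2 : ∀ v ∈ C, z v = x v
          · by_cases h3 : ∀ v ∈ B, z v = x v
            · rw [if_pos ⟨h1, h2⟩, if_pos h3,
                if_pos ⟨h1, Finset.forall_mem_union.mpr ⟨h3, h2⟩⟩]
            · rw [if_pos ⟨h1, h2⟩, if_neg h3, if_neg]
              rintro ⟨-, hBC'⟩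
              exact h3 fun v hv => (Finset.forall_mem_union.mp hBC').1 v hv
          · rw [if_neg (fun h => h2 h.2), if_neg]
            rintro ⟨-, hBC'⟩
            exact h2 fun v hv => (Finset.forall_mem_union.mp hBC').2 v hv
        · rw [if_neg (fun h => h1 h.1), if_neg (fun h => h1 h.1)]
      rw [Finset.sum_congr rfl fun z _ => estep2 z]
      exact sum_single d GG (B ∪ C) hGdep x
    show margin d p (A ∪ B ∪ C) x * margin d p C x
      = margin d p (A ∪ C) x * margin d p (B ∪ C) x
    rw [hfact x, mC, mAC, mBC]
    ring
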